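/- For every integer n ≥ 2 and every real x with √(n−1) ≤ x ≤ n, the identity Ā(n,n) − Ā(n,x) = B̄₁₁ᶜ(n,x) − 2·Σ_{x ≤ j < n} ( C̄(j,j) − C̄(j,x) ) holds, where Ā(n,x) := Σ_{2 ≤ b ≤ x} (2/(b−1))·S_b(n)·log b, B̄₁₁ᶜ(n,x) := n(n−1)·Σ_{x < b ≤ n} (log b)/(b−1), and C̄(m,y) := Σ_{1 ≤ b ≤ y} ⌊m/b⌋·log b. -/

import Mathlib

open Real

/-- Sum of base-`b` digits of `n`. -/
def digSum (b n : ℕ) : ℕ := (Nat.digits b n).sum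

/-- Running digit sum `S_b(n) = Σ_{j=1}^{n-1} d_b(j)`. -/
def runSum (b n : ℕ) : ℕ := ∑ j ∈ Finset.range n, digSum b j

/-- `Ā(n,x) = Σ_{2 ≤ b ≤ x} (2/(b−1)) S_b(n) log b`. -/
noncomputable def Abar (n : ℕ) (x : ℝ) : ℝ :=
  ∑ b ∈ Finset.Icc 2 ⌊x⌋₊, 2 / ((b : ℝ) - 1) * (runSum b n : ℝ) * Real.log b

/-- `C̄(m,y) = Σ_{1 ≤ b ≤ y} ⌊m/b⌋ log b`. -/
noncomputable def Cbar (m : ℕ) (y : ℝ) : ℝ :=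
  ∑ b ∈ Finset.Icc 1 ⌊y⌋₊, ((m / b : ℕ) : ℝ) * Real.log b

lemma digSum_lt_base {b m : ℕ} (hb : 2 ≤ b) (hm : m < b) : digSum b m = m := by
  rcases Nat.eq_zero_or_pos m with h | h
  · simp [digSum, h]
  · rw [digSum, Nat.digits_def' (by omega : 1 < b) h, Nat.mod_eq_of_lt hm,
      Nat.div_eq_of_lt hm]
    simp

lemma digSum_eq {b j : ℕ} (hb : 2 ≤ b) (hj : j < b ^ 2) :
    digSum b j = j % b + j / b := by
  rcases Nat.eq_zero_or_pos j with h | h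
  · simp [digSum, h]
  · have hd : j / b < b := Nat.div_lt_of_lt_mul (by nlinarith)
    rw [digSum, Nat.digits_def' (by omega : 1 < b) h, List.sum_cons]
    have : (Nat.digits b (j / b)).sum = digSum b (j / b) := rfl
    rw [this, digSum_lt_base hb hd]

lemma runSum_key {b n : ℕ} (hb : 2 ≤ b) (hn : n ≤ b ^ 2) :
    (runSum b n + (b - 1) * ∑ j ∈ Finset.range n, j / b) * 2 = n * (n - 1) := by
  have h1 : runSum b n + (b - 1) * ∑ j ∈ Finset.range n, j / b
      = ∑ j ∈ Finset.range n, j := by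
    rw [runSum, Finset.mul_sum, ← Finset.sum_add_distrib]
    apply Finset.sum_congr rfl
    intro j hj
    have hj' : j < b ^ 2 := lt_of_lt_of_le (Finset.mem_range.mp hj) hn
    rw [digSum_eq hb hj']
    have h2 := Nat.mod_add_div j b
    have h3 : b * (j / b) = (1 + (b-1)) * (j / b) := by congr 1; omega
    rw [add_mul, one_mul] at h3
    omega
  rw [h1, Finset.sum_range_id_mul_two]

lemma runSum_real {b n : ℕ} (hb : 2 ≤ b) (hn1 : 1 ≤ n) (hn : n ≤ b ^ 2) :
    2 * (runSum b n : ℝ)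
      = (n : ℝ) * ((n : ℝ) - 1)
        - 2 * ((b : ℝ) - 1) * ∑ j ∈ Finset.range n, ((j / b : ℕ) : ℝ) := by
  have h := runSum_key hb hn
  have h' := congrArg (fun m : ℕ => (m : ℝ)) h
  simp only [Nat.cast_mul, Nat.cast_add, Nat.cast_ofNat, Nat.cast_sum,
    Nat.cast_sub (by omega : 1 ≤ b), Nat.cast_sub hn1, Nat.cast_one] at h'
  linarith

lemma term_eq {b n : ℕ} (hb : 2 ≤ b) (hn1 : 1 ≤ n) (hn : n ≤ b ^ 2) :
    2 / ((b : ℝ) - 1) * (runSum b n : ℝ) * Real.log b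
      = (n : ℝ) * ((n : ℝ) - 1) * (Real.log b / ((b : ℝ) - 1))
        - 2 * ∑ j ∈ Finset.range n, ((j / b : ℕ) : ℝ) * Real.log b := by
  have hb1 : (1 : ℝ) < (b : ℝ) := by exact_mod_cast (by omega : 1 < b)
  have hb' : ((b : ℝ) - 1) ≠ 0 := by linarith
  rw [← Finset.sum_mul]
  have h := runSum_real hb hn1 hn
  field_simp
  linear_combination Real.log b * h

/-- For `n ≥ 2` and `√(n−1) ≤ x ≤ n`,
`Ā(n,n) − Ā(n,x) = B̄₁₁ᶜ(n,x) − 2 Σ_{x ≤ j < n} (C̄(j,j) − C̄(j,x))`. -/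
theorem Abar_complement_formula (n : ℕ) (hn : 2 ≤ n) (x : ℝ)
    (hx1 : Real.sqrt ((n : ℝ) - 1) ≤ x) (hx2 : x ≤ n) :
    Abar n n - Abar n x =
      (n : ℝ) * ((n : ℝ) - 1) * (∑ b ∈ Finset.Ioc ⌊x⌋₊ n, Real.log b / ((b : ℝ) - 1))
        - 2 * ∑ j ∈ Finset.Ico ⌈x⌉₊ n, (Cbar j j - Cbar j x) := by
  set F := ⌊x⌋₊ with hF
  have hx0 : (0 : ℝ) ≤ x := le_trans (Real.sqrt_nonneg _) hx1
  have hn1R : (1 : ℝ) ≤ (n : ℝ) - 1 := by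
    have : (2 : ℝ) ≤ n := by exact_mod_cast hn
    linarith
  have hx1' : (1 : ℝ) ≤ x := by
    have h := Real.sqrt_le_sqrt hn1R
    rw [Real.sqrt_one] at h
    exact le_trans h hx1
  have hF1 : 1 ≤ F := Nat.le_floor (by exact_mod_cast hx1')
  have hFn : F ≤ n := by
    have := Nat.floor_le_floor hx2
    rwa [Nat.floor_natCast] at this
  -- b > F implies n ≤ b^2 and 2 ≤ b
  have hbig : ∀ b : ℕ, F < b → n ≤ b ^ 2 := by
    intro b hb
    have hxb : x < (b : ℝ) := lt_of_lt_of_le (Nat.lt_floor_add_one x) (by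
      exact_mod_cast (by exact_mod_cast Nat.add_one_le_iff.mpr hb : (F:ℝ) + 1 ≤ b))
    have hs : Real.sqrt ((n : ℝ) - 1) < (b : ℝ) := lt_of_le_of_lt hx1 hxb
    have hb0 : (0 : ℝ) < b := lt_of_le_of_lt (Real.sqrt_nonneg _) hs
    have : (n : ℝ) - 1 < (b : ℝ) ^ 2 := by
      have := Real.sq_sqrt (by linarith : (0:ℝ) ≤ (n:ℝ) - 1)
      nlinarith [Real.sqrt_nonneg ((n:ℝ) - 1)]
    have : ((n - 1 : ℕ) : ℝ) < ((b ^ 2 : ℕ) : ℝ) := by push_cast [Nat.cast_sub (by omega : 1 ≤ n)]; linarith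
    have := Nat.cast_lt.mp this
    omega
  -- Step A: difference of Abar as sum over Ioc F n
  have hsplit : Abar n n - Abar n x = ∑ b ∈ Finset.Ioc F n,
      2 / ((b : ℝ) - 1) * (runSum b n : ℝ) * Real.log b := by
    rw [Abar, Abar, Nat.floor_natCast, ← hF,
      ← Finset.sum_sdiff_eq_sub (Finset.Icc_subset_Icc_right hFn)]
    congr 1
    ext b
    simp only [Finset.mem_sdiff, Finset.mem_Icc, Finset.mem_Ioc]
    omega
  rw [hsplit]
  have hterm : ∀ b ∈ Finset.Ioc F n,
      2 / ((b : ℝ) - 1) * (runSum b n : ℝ) * Real.log b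
        = (n : ℝ) * ((n : ℝ) - 1) * (Real.log b / ((b : ℝ) - 1))
          - 2 * ∑ j ∈ Finset.range n, ((j / b : ℕ) : ℝ) * Real.log b := by
    intro b hb
    rw [Finset.mem_Ioc] at hb
    exact term_eq (by omega) (by omega) (hbig b hb.1)
  rw [Finset.sum_congr rfl hterm, Finset.sum_sub_distrib, ← Finset.mul_sum,
    ← Finset.mul_sum]
  -- Step B: rewrite the Cbar sum
  have hC : ∀ j ∈ Finset.Ico ⌈x⌉₊ n, Cbar j j - Cbar j x
      = ∑ b ∈ Finset.Ioc F n, ((j / b : ℕ) : ℝ) * Real.log b := by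
    intro j hj
    rw [Finset.mem_Ico] at hj
    have hFj : F ≤ j := le_trans (Nat.floor_le_ceil x) hj.1
    have h1 : Cbar j j - Cbar j x
        = ∑ b ∈ Finset.Ioc F j, ((j / b : ℕ) : ℝ) * Real.log b := by
      rw [Cbar, Cbar, Nat.floor_natCast, ← hF,
        ← Finset.sum_sdiff_eq_sub (Finset.Icc_subset_Icc_right hFj)]
      congr 1
      ext b
      simp only [Finset.mem_sdiff, Finset.mem_Icc, Finset.mem_Ioc]
      omega
    rw [h1]
    apply Finset.sum_subset (Finset.Ioc_subset_Ioc_right (le_of_lt hj.2))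
    intro b hb hb'
    rw [Finset.mem_Ioc] at hb hb'
    have : j < b := by omega
    rw [Nat.div_eq_of_lt this]
    simp
  congr 2
  rw [Finset.sum_congr rfl hC, Finset.sum_comm]
  symm
  apply Finset.sum_subset
  · intro j hj
    rw [Finset.mem_Ico] at hj
    exact Finset.mem_range.mpr hj.2
  · intro j hj hj'
    rw [Finset.mem_range] at hj
    rw [Finset.mem_Ico] at hj'
    have hjF : j ≤ F := by
      have := Nat.ceil_le_floor_add_one x
      omega
    apply Finset.sum_eq_zero
    intro b hb
    rw [Finset.mem_Ioc] at hb
    rw [Nat.div_eq_of_lt (by omega : j < b)]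
    simp
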